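/- Let l ≥ 1, s ≥ 1, let n : Fin l → ℕ and m : Fin s → ℕ be positive. Then there exist N ≥ 1 and an injective homomorphism of MV-algebras from ∏_{i<l} Ł_{n_i} into (∏_{j<s} Ł_{m_j})^N if and only if both: (1) for every i < l there exists j < s with n_i ∣ m_j, and (2) for every j < s there exists i < l with n_i ∣ m_j. -/

import Mathlib

/-- The carrier of the Łukasiewicz chain Łₙ : {k/n : k ∈ ℕ, 0 ≤ k ≤ n} ⊆ ℚ. -/
abbrev Luk (n : ℕ+) : Type := {x : ℚ // ∃ k : ℕ, k ≤ (n : ℕ) ∧ x = (k : ℚ) / (n : ℕ)}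

/-- The constant 0 of Łₙ. -/
def lukZero (n : ℕ+) : Luk n := ⟨0, 0, Nat.zero_le _, by simp⟩

/-- The negation ¬x = 1 - x of Łₙ. -/
def lukNeg {n : ℕ+} (x : Luk n) : Luk n :=
  ⟨1 - x.1, by
    obtain ⟨k, hk, hx⟩ := x.2
    refine ⟨(n : ℕ) - k, Nat.sub_le _ _, ?_⟩
    have hn : ((n : ℕ) : ℚ) ≠ 0 := by exact_mod_cast n.pos.ne'
    rw [hx, Nat.cast_sub hk, sub_div, div_self hn]⟩

/-- The truncated sum x ⊕ y = min 1 (x + y) of Łₙ. -/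
def lukOplus {n : ℕ+} (x y : Luk n) : Luk n :=
  ⟨min 1 (x.1 + y.1), by
    obtain ⟨k, hk, hx⟩ := x.2
    obtain ⟨j, hj, hy⟩ := y.2
    refine ⟨min (n : ℕ) (k + j), min_le_left _ _, ?_⟩
    have hn : (0 : ℚ) < ((n : ℕ) : ℚ) := by exact_mod_cast n.pos
    rw [hx, hy, ← add_div]
    rcases le_total (k + j) (n : ℕ) with h | h
    · rw [min_eq_right h, min_eq_right]
      · push_cast; ring_nf
      · rw [div_le_one hn]; exact_mod_cast h
    · rw [min_eq_left h, min_eq_left, div_self hn.ne']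
      · rw [one_le_div hn]; exact_mod_cast h⟩

namespace LukAux

lemma luk_nonneg {nn : ℕ+} (x : Luk nn) : 0 ≤ x.1 := by
  obtain ⟨k, hk, hx⟩ := x.2
  rw [hx]; positivity

lemma luk_le_one {nn : ℕ+} (x : Luk nn) : x.1 ≤ 1 := by
  obtain ⟨k, hk, hx⟩ := x.2
  have hn : (0:ℚ) < ((nn:ℕ):ℚ) := by exact_mod_cast nn.pos
  rw [hx, div_le_one hn]; exact_mod_cast hk

/-- Inclusion Luk a → Luk b when a ∣ b; identity on values. -/
def incl {a b : ℕ+} (h : (a:ℕ) ∣ (b:ℕ)) (x : Luk a) : Luk b :=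
  ⟨x.1, by
    obtain ⟨k, hk, hx⟩ := x.2
    obtain ⟨c, hc⟩ := h
    have hc0 : c ≠ 0 := by rintro rfl; rw [mul_zero] at hc; exact b.pos.ne' hc
    refine ⟨k * c, by rw [hc]; exact Nat.mul_le_mul_right c hk, ?_⟩
    have ha : ((a:ℕ):ℚ) ≠ 0 := by exact_mod_cast a.pos.ne'
    have hcq : (c:ℚ) ≠ 0 := by exact_mod_cast hc0
    rw [hx, hc]; push_cast; field_simp⟩

@[simp] lemma incl_val {a b : ℕ+} (h : (a:ℕ) ∣ (b:ℕ)) (x : Luk a) :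
    (incl h x).1 = x.1 := rfl

/-- the delta element with value k/(n i0) at i0 and 0 elsewhere. -/
def w {l : ℕ} (n : Fin l → ℕ+) (i0 : Fin l) (k : ℕ) (hk : k ≤ (n i0 : ℕ)) :
    ∀ i, Luk (n i) :=
  fun i => if h : i = i0 then
    ⟨(k:ℚ)/((n i0 : ℕ):ℚ), by subst h; exact ⟨k, hk, rfl⟩⟩
  else lukZero (n i)

lemma w_val_self {l : ℕ} (n : Fin l → ℕ+) (i0 : Fin l) (k : ℕ) (hk : k ≤ (n i0 : ℕ)) :
    (w n i0 k hk i0).1 = (k:ℚ)/((n i0 : ℕ):ℚ) := by simp [w]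

lemma w_val_ne {l : ℕ} (n : Fin l → ℕ+) (i0 : Fin l) (k : ℕ) (hk : k ≤ (n i0 : ℕ))
    {i : Fin l} (h : i ≠ i0) : (w n i0 k hk i).1 = 0 := by simp [w, h, lukZero]

end LukAux

namespace LukAux

lemma idem_val {mm : ℕ+} {a : Luk mm} (h : lukOplus a a = a) : a.1 = 0 ∨ a.1 = 1 := by
  have hv : min 1 (a.1 + a.1) = a.1 := congrArg Subtype.val h
  have h0 := luk_nonneg a
  have h1 := luk_le_one a
  rcases le_or_gt 1 (a.1 + a.1) with hle | hlt
  · right; rw [min_eq_left hle] at hv; linarith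
  · left; rw [min_eq_right hlt.le] at hv; linarith

/-- the top delta element e_{i0}. -/
def e {l : ℕ} (n : Fin l → ℕ+) (i0 : Fin l) : ∀ i, Luk (n i) :=
  w n i0 (n i0 : ℕ) le_rfl

lemma e_val_self {l : ℕ} (n : Fin l → ℕ+) (i0 : Fin l) : (e n i0 i0).1 = 1 := by
  have : ((n i0 : ℕ):ℚ) ≠ 0 := by exact_mod_cast (n i0).pos.ne'
  rw [e, w_val_self, div_self this]

lemma e_val_ne {l : ℕ} (n : Fin l → ℕ+) (i0 : Fin l) {i : Fin l} (h : i ≠ i0) :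
    (e n i0 i).1 = 0 := w_val_ne n i0 _ _ h

lemma e_idem {l : ℕ} (n : Fin l → ℕ+) (i0 : Fin l) :
    (fun i => lukOplus (e n i0 i) (e n i0 i)) = e n i0 := by
  funext i
  apply Subtype.ext
  show min 1 ((e n i0 i).1 + (e n i0 i).1) = (e n i0 i).1
  by_cases h : i = i0
  · subst h; rw [e_val_self]; norm_num
  · rw [e_val_ne n i0 h]; norm_num

theorem hom_dvd {l : ℕ} {n : Fin l → ℕ+} {mm : ℕ+}
    (φ : (∀ i, Luk (n i)) → Luk mm)
    (hop : ∀ x y, φ (fun i => lukOplus (x i) (y i)) = lukOplus (φ x) (φ y))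
    (hneg : ∀ x, φ (fun i => lukNeg (x i)) = lukNeg (φ x))
    (hzero : φ (fun i => lukZero (n i)) = lukZero mm)
    (i0 : Fin l) (he : (φ (e n i0)).1 = 1) :
    (n i0 : ℕ) ∣ (mm : ℕ) := by
  set nn : ℕ := (n i0 : ℕ) with hnn
  have hn1 : 1 ≤ nn := (n i0).pos
  have hnq : (0:ℚ) < (nn:ℚ) := by exact_mod_cast (n i0).pos
  set u : ∀ i, Luk (n i) := w n i0 1 hn1 with hu
  set t : ℚ := (φ u).1 with ht
  have ht0 : 0 ≤ t := luk_nonneg _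
  have ht1 : t ≤ 1 := luk_le_one _
  -- Step A : φ (w k) = min 1 (k * t)
  have stepA : ∀ k (hk : k ≤ nn), (φ (w n i0 k hk)).1 = min 1 ((k:ℚ) * t) := by
    intro k
    induction k with
    | zero =>
      intro hk
      have hzw : w n i0 0 hk = fun i => lukZero (n i) := by
        funext i
        apply Subtype.ext
        by_cases h : i = i0
        · subst h; rw [w_val_self]; simp [lukZero]
        · rw [w_val_ne n i0 _ _ h]; rfl
      rw [hzw, hzero]
      simp [lukZero]
    | succ k ih =>
      intro hk
      have hk' : k ≤ nn := Nat.le_of_succ_le hk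
      have hsplit : w n i0 (k+1) hk = fun i => lukOplus (w n i0 k hk' i) (u i) := by
        funext i
        apply Subtype.ext
        show (w n i0 (k+1) hk i).1 = min 1 ((w n i0 k hk' i).1 + (u i).1)
        by_cases h : i = i0
        · subst h
          rw [w_val_self, hu, w_val_self, w_val_self, ← add_div]
          rw [min_eq_right]
          · push_cast; ring_nf
          · rw [div_le_one hnq]; push_cast; exact_mod_cast hk
        · rw [w_val_ne n i0 _ _ h, hu, w_val_ne n i0 _ _ h, w_val_ne n i0 _ _ h]
          norm_num
      rw [hsplit, hop]
      show min 1 ((φ (w n i0 k hk')).1 + t) = _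
      rw [ih hk']
      rcases le_or_gt ((k:ℚ) * t) 1 with h | h
      · rw [min_eq_right h]
        congr 1
        push_cast; ring
      · rw [min_eq_left h.le, min_eq_left (by linarith), min_eq_left (by push_cast; nlinarith)]
  -- Step B : nn * t ≥ 1
  have hB : 1 ≤ (nn:ℚ) * t := by
    have := stepA nn le_rfl
    rw [show w n i0 nn le_rfl = e n i0 from rfl, he] at this
    rcases le_or_gt 1 ((nn:ℚ) * t) with h | h
    · exact h
    · rw [min_eq_right h.le] at this; linarith
  -- Step C : ¬u = ¬e ⊕ w (nn - 1)
  have hnn1 : nn - 1 ≤ nn := Nat.sub_le _ _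
  have hcast : ((nn - 1 : ℕ):ℚ) = (nn:ℚ) - 1 := by
    rw [Nat.cast_sub hn1]; norm_num
  have hC : (fun i => lukNeg (u i)) =
      fun i => lukOplus (lukNeg (e n i0 i)) (w n i0 (nn-1) hnn1 i) := by
    funext i
    apply Subtype.ext
    show 1 - (u i).1 = min 1 ((1 - (e n i0 i).1) + (w n i0 (nn-1) hnn1 i).1)
    by_cases h : i = i0
    · subst h
      rw [hu, w_val_self, e_val_self, w_val_self, hcast, ← hnn]
      rw [min_eq_right]
      · rw [sub_self, zero_add]; field_simp; norm_num
      · rw [sub_self, zero_add, div_le_one hnq]; linarith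
    · rw [hu, w_val_ne n i0 _ _ h, e_val_ne n i0 h, w_val_ne n i0 _ _ h]
      norm_num
  have hD : 1 - t = min 1 (((nn:ℚ) - 1) * t) := by
    have e1 : (φ (fun i => lukNeg (u i))).1 = 1 - t := by rw [hneg]; rfl
    have e2 := hop (fun i => lukNeg (e n i0 i)) (w n i0 (nn-1) hnn1)
    rw [← hC] at e2
    have e3 : (φ (fun i => lukNeg (u i))).1 =
        min 1 ((1 - (φ (e n i0)).1) + (φ (w n i0 (nn-1) hnn1)).1) := by
      rw [e2]
      show min 1 ((φ (fun i => lukNeg (e n i0 i))).1 + _) = _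
      rw [hneg]
      rfl
    rw [e1, he, stepA (nn-1) hnn1, hcast] at e3
    rw [e3]
    rcases le_or_gt (((nn:ℚ) - 1) * t) 1 with h | h
    · rw [min_eq_right h, sub_self, zero_add]; exact min_eq_right h
    · rw [min_eq_left h.le]; norm_num
  -- conclude t = 1/nn
  have htpos : 0 < t := by nlinarith
  have hE : t = 1 / (nn:ℚ) := by
    rcases le_or_gt (((nn:ℚ) - 1) * t) 1 with h | h
    · rw [min_eq_right h] at hD
      field_simp
      nlinarith
    · rw [min_eq_left h.le] at hD; linarith
  obtain ⟨c, hcle, hceq⟩ := (φ u).2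
  have hmq : (0:ℚ) < ((mm:ℕ):ℚ) := by exact_mod_cast mm.pos
  rw [← ht, hE] at hceq
  have : ((mm:ℕ):ℚ) = (c:ℚ) * (nn:ℚ) := by
    field_simp at hceq
    linarith
  have hnat : (mm:ℕ) = c * nn := by exact_mod_cast this
  exact ⟨c, by rw [hnat]; ring⟩

end LukAux

namespace LukAux

/-- partial-sum element: 1 on coordinates < k, 0 elsewhere. -/
def sL {l : ℕ} (n : Fin l → ℕ+) (k : ℕ) : ∀ i, Luk (n i) :=
  fun i => if (i:ℕ) < k then lukNeg (lukZero (n i)) else lukZero (n i)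

lemma sL_val_lt {l : ℕ} (n : Fin l → ℕ+) {k : ℕ} {i : Fin l} (h : (i:ℕ) < k) :
    (sL n k i).1 = 1 := by simp [sL, h, lukNeg, lukZero]

lemma sL_val_ge {l : ℕ} (n : Fin l → ℕ+) {k : ℕ} {i : Fin l} (h : ¬ (i:ℕ) < k) :
    (sL n k i).1 = 0 := by simp [sL, h, lukZero]

theorem exists_one {l : ℕ} {n : Fin l → ℕ+} {mm : ℕ+}
    (φ : (∀ i, Luk (n i)) → Luk mm)
    (hop : ∀ x y, φ (fun i => lukOplus (x i) (y i)) = lukOplus (φ x) (φ y))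
    (hneg : ∀ x, φ (fun i => lukNeg (x i)) = lukNeg (φ x))
    (hzero : φ (fun i => lukZero (n i)) = lukZero mm) :
    ∃ i0 : Fin l, (φ (e n i0)).1 = 1 := by
  by_contra hcon
  push_neg at hcon
  have hall : ∀ i, (φ (e n i)).1 = 0 := by
    intro i
    have hid : lukOplus (φ (e n i)) (φ (e n i)) = φ (e n i) := by
      rw [← hop]; rw [e_idem]
    rcases idem_val hid with h | h
    · exact h
    · exact absurd h (hcon i)
  have key : ∀ k, k ≤ l → (φ (sL n k)).1 = 0 := by
    intro k
    induction k with
    | zero =>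
      intro _
      have : sL n 0 = fun i => lukZero (n i) := by
        funext i; simp [sL]
      rw [this, hzero]; rfl
    | succ k ih =>
      intro hk
      have hkl : k < l := hk
      set j : Fin l := ⟨k, hkl⟩ with hj
      have hsplit : sL n (k+1) = fun i => lukOplus (sL n k i) (e n j i) := by
        funext i
        apply Subtype.ext
        show (sL n (k+1) i).1 = min 1 ((sL n k i).1 + (e n j i).1)
        rcases lt_trichotomy (i:ℕ) k with h | h | h
        · have hij : i ≠ j := by
            intro hh; rw [hh] at h; exact absurd h (lt_irrefl _)
          rw [sL_val_lt n (Nat.lt_succ_of_lt h), sL_val_lt n h, e_val_ne n j hij]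
          norm_num
        · have hij : i = j := by
            apply Fin.ext; rw [hj]; exact h
          rw [hij, sL_val_lt n (by rw [hj]; exact Nat.lt_succ_self k),
            sL_val_ge n (by rw [hj]; exact lt_irrefl k), e_val_self]
          norm_num
        · have hij : i ≠ j := by
            intro hh; rw [hh] at h; exact absurd h (lt_irrefl _)
          rw [sL_val_ge n (by omega), sL_val_ge n (by omega), e_val_ne n j hij]
          norm_num
      rw [hsplit, hop]
      show min 1 ((φ (sL n k)).1 + (φ (e n j)).1) = 0
      rw [ih (Nat.le_of_succ_le hk), hall j]
      norm_num
  have htop : (φ (sL n l)).1 = 1 := by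
    have : sL n l = fun i => lukNeg (lukZero (n i)) := by
      funext i; simp [sL, i.isLt]
    rw [this]
    have h2 : (fun i => lukNeg (lukZero (n i))) =
        fun i => lukNeg ((fun i' => lukZero (n i')) i) := rfl
    rw [h2, hneg, hzero]
    show 1 - (0:ℚ) = 1
    norm_num
  rw [key l le_rfl] at htop
  norm_num at htop

end LukAux

/-- ∏_i Ł_(n i) embeds into some finite power of ∏_j Ł_(m j) iff every n i divides
some m j and every m j is divided by some n i. -/
theorem embed_power_iff (l s : ℕ) (hl : 1 ≤ l) (hs : 1 ≤ s)
    (n : Fin l → ℕ+) (m : Fin s → ℕ+) :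
    (∃ (N : ℕ), 1 ≤ N ∧
      ∃ f : (∀ i, Luk (n i)) → (Fin N → ∀ j, Luk (m j)),
        Function.Injective f ∧
        (∀ x y, f (fun i => lukOplus (x i) (y i)) =
          fun r j => lukOplus (f x r j) (f y r j)) ∧
        (∀ x, f (fun i => lukNeg (x i)) = fun r j => lukNeg (f x r j)) ∧
        (f (fun i => lukZero (n i)) = fun r j => lukZero (m j))) ↔
    ((∀ i : Fin l, ∃ j : Fin s, (n i : ℕ) ∣ (m j : ℕ)) ∧
      (∀ j : Fin s, ∃ i : Fin l, (n i : ℕ) ∣ (m j : ℕ))) := by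
  constructor
  · rintro ⟨N, hN, f, hinj, hop, hneg, hzero⟩
    constructor
    · intro i
      -- the delta element e_i is nonzero, so some component of f separates it from 0
      have hne : f (LukAux.e n i) ≠ f (fun i' => lukZero (n i')) := by
        intro h
        have hEq := hinj h
        have hv2 : (LukAux.e n i i).1 = 0 := congrArg Subtype.val (congrFun hEq i)
        rw [LukAux.e_val_self] at hv2
        exact one_ne_zero hv2
      have hsep : ∃ r j, f (LukAux.e n i) r j ≠ lukZero (m j) := by
        by_contra hc
        push_neg at hc
        apply hne
        rw [hzero]
        funext r j
        exact hc r j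
      obtain ⟨r, j, hrj⟩ := hsep
      refine ⟨j, ?_⟩
      have hop' : ∀ x y, (fun x => f x r j) (fun i' => lukOplus (x i') (y i')) =
          lukOplus (f x r j) (f y r j) := fun x y => congrFun (congrFun (hop x y) r) j
      have hneg' : ∀ x, (fun x => f x r j) (fun i' => lukNeg (x i')) =
          lukNeg (f x r j) := fun x => congrFun (congrFun (hneg x) r) j
      have hzero' : (fun x => f x r j) (fun i' => lukZero (n i')) = lukZero (m j) :=
        congrFun (congrFun hzero r) j
      have hid : lukOplus (f (LukAux.e n i) r j) (f (LukAux.e n i) r j)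
          = f (LukAux.e n i) r j := by
        rw [← hop' (LukAux.e n i) (LukAux.e n i), LukAux.e_idem]
      rcases LukAux.idem_val hid with h | h
      · exact absurd (Subtype.ext h) hrj
      · exact LukAux.hom_dvd (fun x => f x r j) hop' hneg' hzero' i h
    · intro j
      have hN0 : (0:ℕ) < N := hN
      set r : Fin N := ⟨0, hN0⟩ with hr
      have hop' : ∀ x y, (fun x => f x r j) (fun i' => lukOplus (x i') (y i')) =
          lukOplus (f x r j) (f y r j) := fun x y => congrFun (congrFun (hop x y) r) j
      have hneg' : ∀ x, (fun x => f x r j) (fun i' => lukNeg (x i')) =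
          lukNeg (f x r j) := fun x => congrFun (congrFun (hneg x) r) j
      have hzero' : (fun x => f x r j) (fun i' => lukZero (n i')) = lukZero (m j) :=
        congrFun (congrFun hzero r) j
      obtain ⟨i0, hi0⟩ := LukAux.exists_one (fun x => f x r j) hop' hneg' hzero'
      exact ⟨i0, LukAux.hom_dvd (fun x => f x r j) hop' hneg' hzero' i0 hi0⟩
  · rintro ⟨h1, h2⟩
    choose J hJ using h1
    choose I hI using h2
    refine ⟨l, hl, fun x r j =>
      if h : (n r : ℕ) ∣ (m j : ℕ) then LukAux.incl h (x r)
      else LukAux.incl (hI j) (x (I j)), ?_, ?_, ?_, ?_⟩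
    · intro x y hxy
      funext i
      have h := congrFun (congrFun hxy i) (J i)
      simp only [dif_pos (hJ i)] at h
      have h2 := congrArg Subtype.val h
      exact Subtype.ext h2
    · intro x y
      funext r j
      by_cases h : (n r : ℕ) ∣ (m j : ℕ)
      · simp only [dif_pos h]; exact Subtype.ext rfl
      · simp only [dif_neg h]; exact Subtype.ext rfl
    · intro x
      funext r j
      by_cases h : (n r : ℕ) ∣ (m j : ℕ)
      · simp only [dif_pos h]; exact Subtype.ext rfl
      · simp only [dif_neg h]; exact Subtype.ext rfl
    · funext r j
      by_cases h : (n r : ℕ) ∣ (m j : ℕ)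
      · simp only [dif_pos h]; exact Subtype.ext rfl
      · simp only [dif_neg h]; exact Subtype.ext rfl
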